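/- With α = Δ+2, so that K = {1, 2, …, Δ+1, Δ+2}, there exists a tuple (β_{e_1}, …, β_{e_m}) with each β_{e_j} ∈ {1, 2, …, Δ+2} such that Q_1(β_{e_1}, …, β_{e_m}) ≠ 0 in Z_p; in particular the Fermat reduction Q'_1 of Q_1 is not the zero polynomial. -/

import Mathlib

open MvPolynomial
open scoped Classical

noncomputable section

/-- Exponent reduction implementing Fermat's relation `x^p ≡ x`:
`0 ↦ 0` and `k ↦ ((k-1) mod (p-1)) + 1` for `k ≥ 1`. -/
def fermatExp (p k : ℕ) : ℕ := if k = 0 then 0 else (k - 1) % (p - 1) + 1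

lemma fermatExp_zero (p : ℕ) : fermatExp p 0 = 0 := by simp [fermatExp]

/-- The Fermat reduction `F'` of a multivariate polynomial over `Z_p`: every exponent is
reduced using `x^p ≡ x`, so that the result has degree `≤ p-1` in each variable. -/
def fermatReduce {σ : Type*} (p : ℕ) (F : MvPolynomial σ (ZMod p)) : MvPolynomial σ (ZMod p) :=
  F.support.sum fun d => monomial (d.mapRange (fermatExp p) (fermatExp_zero p)) (F.coeff d)

/-- Univariate Fermat reduction. -/
def fermatReduceUni (p : ℕ) (f : Polynomial (ZMod p)) : Polynomial (ZMod p) :=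
  f.support.sum fun k => Polynomial.monomial (fermatExp p k) (f.coeff k)

/-- `N_e(v_i)`: the edges incident to the vertex `i`. -/
def incidentE {n m : ℕ} (ed : Fin m → Sym2 (Fin n)) (i : Fin n) : Finset (Fin m) :=
  Finset.univ.filter fun k => i ∈ ed k

/-- `N_i(v_i)`: the neighbours of `v_i` other than `v_1, …, v_{i-1}`. -/
def laterNbrs {n m : ℕ} (ed : Fin m → Sym2 (Fin n)) (i : Fin n) : Finset (Fin n) :=
  Finset.univ.filter fun j => (∃ k, ed k = s(i, j)) ∧ ¬ j < i

/-- `N_i(e_i)`: the edges sharing an endpoint with `e_i`, other than `e_1, …, e_{i-1}`. -/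
def laterAdjE {n m : ℕ} (ed : Fin m → Sym2 (Fin n)) (k : Fin m) : Finset (Fin m) :=
  Finset.univ.filter fun l => (l ≠ k ∧ ∃ x, x ∈ ed k ∧ x ∈ ed l) ∧ ¬ l < k

/-- The polynomial `P` (vertex variables are `Sum.inl`, edge variables are `Sum.inr`). -/
def Ppoly (n m Δ p : ℕ) (ed : Fin m → Sym2 (Fin n)) : MvPolynomial (Fin n ⊕ Fin m) (ZMod p) :=
  ∏ i : Fin n,
    ((∏ j ∈ laterNbrs ed i, (X (Sum.inl i) - X (Sum.inl j))) *
      (∏ k ∈ incidentE ed i, (X (Sum.inl i) - X (Sum.inr k))) *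
      (∏ l ∈ Finset.Icc (Δ + 2) p, (X (Sum.inl i) - C (l : ZMod p))))

/-- The coefficient of the vertex-monomial `∏ v_j ^ (d j)` of `F`, as a polynomial in the
edge variables. -/
def vCoeff {n m p : ℕ} (F : MvPolynomial (Fin n ⊕ Fin m) (ZMod p)) (d : Fin n →₀ ℕ) :
    MvPolynomial (Fin m) (ZMod p) :=
  ((sumAlgEquiv (ZMod p) (Fin n) (Fin m)) F).coeff d

/-- The colour set `K = {1, …, Δ+1} ∪ {α} ⊆ Z_p`. -/
def colorSet (Δ p : ℕ) (α : ZMod p) : Finset (ZMod p) :=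
  insert α ((Finset.Icc 1 (Δ + 1)).image fun l : ℕ => (l : ZMod p))

/-- The polynomial `E^k`. -/
def Epoly {n m : ℕ} (Δ p : ℕ) [NeZero p] (ed : Fin m → Sym2 (Fin n)) (α : ZMod p) (k : Fin m) :
    MvPolynomial (Fin m) (ZMod p) :=
  (∏ l ∈ laterAdjE ed k, (X k - X l)) *
    (∏ c ∈ Finset.univ \ colorSet Δ p α, (X k - C c))

/-- `Q_i = C^{P'} · E^1 ⋯ E^i`; here `i` is the number of edge factors, so `Qpoly … i`
is the paper's `Q_i` (and `Qpoly … 0 = C^{P'}`). -/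
def Qpoly {n m : ℕ} (Δ p : ℕ) [NeZero p] (ed : Fin m → Sym2 (Fin n)) (α : ZMod p)
    (CP : MvPolynomial (Fin m) (ZMod p)) (i : ℕ) : MvPolynomial (Fin m) (ZMod p) :=
  CP * ∏ k ∈ Finset.univ.filter (fun k : Fin m => (k : ℕ) < i), Epoly Δ p ed α k

/-- Fermat reduction in all variables except the variable `j`. -/
def fermatReduceExcept {m : ℕ} (p : ℕ) (j : Fin m) (F : MvPolynomial (Fin m) (ZMod p)) :
    MvPolynomial (Fin m) (ZMod p) :=
  F.support.sum fun d =>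
    monomial (Finsupp.filter (fun k => k = j) d +
      Finsupp.mapRange (fermatExp p) (fermatExp_zero p) (Finsupp.filter (fun k => k ≠ j) d))
      (F.coeff d)

/-- Given an exponent vector `d0` for the variables other than `j`, the coefficient in `F` of the
monomial `∏_{k ≠ j} X_k ^ (d0 k)`, as a univariate polynomial in the variable `j`. -/
def coeffAt {m p : ℕ} (j : Fin m) (d0 : Fin m →₀ ℕ) (F : MvPolynomial (Fin m) (ZMod p)) :
    Polynomial (ZMod p) :=
  (F.support.filter fun d => ∀ k, k ≠ j → d k = d0 k).sum fun d =>
    Polynomial.monomial (d j) (F.coeff d)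



section Helpers

variable {R : Type*} [CommSemiring R] {σ : Type*}

lemma degreeOf_sum_le' {ι : Type*} (j : σ) (s : Finset ι) (f : ι → MvPolynomial σ R) (d : ℕ)
    (h : ∀ i ∈ s, (f i).degreeOf j ≤ d) : (∑ i ∈ s, f i).degreeOf j ≤ d := by
  classical
  induction s using Finset.induction with
  | empty => simp
  | @insert a s ha ih =>
    rw [Finset.sum_insert ha]
    exact (degreeOf_add_le _ _ _).trans (max_le (h a (by simp))
      (ih fun i hi => h i (by simp [hi])))

lemma degreeOf_prod_le' {ι : Type*} (j : σ) (s : Finset ι) (f : ι → MvPolynomial σ R) :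
    (∏ i ∈ s, f i).degreeOf j ≤ ∑ i ∈ s, (f i).degreeOf j := by
  classical
  induction s using Finset.induction with
  | empty =>
    rw [Finset.prod_empty, Finset.sum_empty, show (1 : MvPolynomial σ R) = C 1 from rfl,
      degreeOf_C]
  | @insert a s ha ih =>
    rw [Finset.prod_insert ha, Finset.sum_insert ha]
    exact (degreeOf_mul_le _ _ _).trans (by gcongr)

lemma degreeOf_X_sub_X_le {R : Type*} [CommRing R] [Nontrivial R] (j s t : σ) :
    (X s - X t : MvPolynomial σ R).degreeOf j ≤ if j = s ∨ j = t then 1 else 0 := by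
  classical
  refine degreeOf_le_iff.mpr fun e he => ?_
  have h1 : e ∈ (X s : MvPolynomial σ R).support ∪ (X t : MvPolynomial σ R).support :=
    Finset.mem_of_subset (support_sub σ _ _) he
  rw [support_X, support_X] at h1
  simp only [Finset.mem_union, Finset.mem_singleton] at h1
  rcases h1 with rfl | rfl <;> rw [Finsupp.single_apply] <;> split <;> simp_all

lemma degreeOf_X_sub_C_le {R : Type*} [CommRing R] [Nontrivial R] (j s : σ) (c : R) :
    (X s - C c : MvPolynomial σ R).degreeOf j ≤ if j = s then 1 else 0 := by
  classical
  refine degreeOf_le_iff.mpr fun e he => ?_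
  have h1 : e ∈ (X s : MvPolynomial σ R).support ∪ (C c : MvPolynomial σ R).support :=
    Finset.mem_of_subset (support_sub σ _ _) he
  rw [support_X] at h1
  rcases Finset.mem_union.mp h1 with h | h
  · rw [Finset.mem_singleton] at h
    subst h
    rw [Finsupp.single_apply]
    split <;> simp_all
  · rw [show (C c : MvPolynomial σ R) = monomial 0 c from rfl] at h
    have h2 : e = 0 := Finset.mem_singleton.mp (support_monomial_subset h)
    subst h2
    simp

lemma support_sum_monomial_sub {ι : Type*} (s : Finset ι) (T : ι → (σ →₀ ℕ)) (c : ι → R) :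
    ∀ e ∈ (∑ i ∈ s, (monomial (T i) (c i) : MvPolynomial σ R)).support, ∃ i ∈ s, e = T i := by
  classical
  intro e he
  obtain ⟨i, hi, hei⟩ := Finset.mem_biUnion.mp (Finset.mem_of_subset support_sum he)
  refine ⟨i, hi, ?_⟩
  have := support_monomial_subset (s := T i) (a := c i) hei
  simpa using this

lemma sumAlgEquiv_monomial {σ τ : Type*} [Fintype σ] [Fintype τ] (u : (σ ⊕ τ) →₀ ℕ) (c : R) :
    sumAlgEquiv R σ τ (monomial u c) =
      monomial (Finsupp.equivFunOnFinite.symm fun b => u (Sum.inl b))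
        (monomial (Finsupp.equivFunOnFinite.symm fun t => u (Sum.inr t)) c) := by
  classical
  have happ : ∀ F, sumAlgEquiv R σ τ F = sumToIter R σ τ F := fun F => by
    have hh : (sumAlgEquiv R σ τ : MvPolynomial (σ ⊕ τ) R →+* MvPolynomial σ (MvPolynomial τ R))
        = sumToIter R σ τ := by
      refine MvPolynomial.ringHom_ext (fun r => ?_) (fun i => ?_)
      · simp [sumToIter_C]
      · cases i <;> simp [sumToIter_Xl, sumToIter_Xr]
    exact RingHom.congr_fun hh F
  rw [happ]
  have h1 : (monomial u c : MvPolynomial (σ ⊕ τ) R) = C c * ∏ i, X i ^ u i := by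
    rw [monomial_eq, Finsupp.prod_pow]
  rw [h1, map_mul, map_prod, Fintype.prod_sum_type]
  simp only [map_pow, sumToIter_C, sumToIter_Xl, sumToIter_Xr]
  rw [monomial_eq, Finsupp.prod_pow, monomial_eq, Finsupp.prod_pow, map_mul, map_prod]
  simp only [map_pow, Finsupp.coe_equivFunOnFinite_symm]
  ring

lemma fermatExp_le (p k : ℕ) : fermatExp p k ≤ k := by
  unfold fermatExp
  split
  · omega
  · have := Nat.mod_le (k - 1) (p - 1); omega

lemma pow_fermatExp (p : ℕ) [Fact p.Prime] (a : ZMod p) (k : ℕ) :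
    a ^ fermatExp p k = a ^ k := by
  rcases Nat.eq_zero_or_pos k with rfl | hk
  · rw [fermatExp_zero]
  have hk0 : ¬ k = 0 := by omega
  have hfe : fermatExp p k = (k - 1) % (p - 1) + 1 := by rw [fermatExp, if_neg hk0]
  rcases eq_or_ne a 0 with rfl | ha
  · rw [zero_pow (by omega), zero_pow (by omega)]
  · have h1 : a ^ (p - 1) = 1 := ZMod.pow_card_sub_one_eq_one ha
    have hp2 : 2 ≤ p := (Fact.out : p.Prime).two_le
    have hk' : k = (p - 1) * ((k - 1) / (p - 1)) + ((k - 1) % (p - 1) + 1) := by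
      have := Nat.div_add_mod (k - 1) (p - 1); omega
    conv_rhs => rw [hk']
    rw [pow_add, pow_mul, h1, one_pow, one_mul, hfe]

lemma eval_fermatReduce {σ : Type*} (p : ℕ) [Fact p.Prime] (β : σ → ZMod p)
    (F : MvPolynomial σ (ZMod p)) : eval β (fermatReduce p F) = eval β F := by
  unfold fermatReduce
  conv_rhs => rw [← support_sum_monomial_coeff F]
  rw [map_sum, map_sum]
  refine Finset.sum_congr rfl fun d _ => ?_
  rw [eval_monomial, eval_monomial]
  congr 1
  rw [Finsupp.prod_mapRange_index (by simp)]
  exact Finsupp.prod_congr fun j _ => pow_fermatExp p (β j) (d j)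

lemma grid_exists {F : Type*} [Field F] :
    ∀ {n : ℕ} (f : MvPolynomial (Fin n) F) (S : Fin n → Finset F), f ≠ 0 →
      (∀ j, f.degreeOf j < (S j).card) →
      ∃ β : Fin n → F, (∀ j, β j ∈ S j) ∧ eval β f ≠ 0 := by
  intro n
  induction n with
  | zero =>
    intro f S hf _
    obtain ⟨a, rfl⟩ := C_surjective (Fin 0) f
    exact ⟨finZeroElim, fun j => j.elim0, by simpa using fun h => hf (by rw [h, map_zero])⟩
  | succ n ih =>
    intro f S hf hdeg
    set q := finSuccEquiv F n f with hq
    have hq0 : q ≠ 0 := fun h => hf ((finSuccEquiv F n).injective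
      (by rw [map_zero]; exact h))
    have hlead : q.coeff q.natDegree ≠ 0 := by
      rw [← Polynomial.leadingCoeff]
      exact Polynomial.leadingCoeff_ne_zero.mpr hq0
    obtain ⟨β', hmem', hev'⟩ := ih (q.coeff q.natDegree) (fun j => S j.succ) hlead
      (fun j => lt_of_le_of_lt (degreeOf_coeff_finSuccEquiv f j q.natDegree) (hdeg j.succ))
    set q' := q.map (eval β') with hq'
    have hq'0 : q' ≠ 0 := fun h => hev' (by
      have : q'.coeff q.natDegree = 0 := by rw [h]; simp
      rwa [hq', Polynomial.coeff_map] at this)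
    have hdeg' : q'.natDegree < (S 0).card := by
      calc q'.natDegree ≤ q.natDegree := Polynomial.natDegree_map_le
        _ = degreeOf 0 f := natDegree_finSuccEquiv f
        _ < (S 0).card := hdeg 0
    have : ∃ a ∈ S 0, ¬ q'.IsRoot a := by
      by_contra hall
      push_neg at hall
      have hsub : S 0 ⊆ q'.roots.toFinset := fun a ha =>
        Multiset.mem_toFinset.mpr ((Polynomial.mem_roots hq'0).mpr (hall a ha))
      have := Finset.card_le_card hsub
      have h2 := (Multiset.toFinset_card_le q'.roots).trans (Polynomial.card_roots' q')
      omega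
    obtain ⟨a, haS, hroot⟩ := this
    refine ⟨Fin.cons a β', fun j => ?_, ?_⟩
    · refine Fin.cases ?_ ?_ j
      · simpa using haS
      · intro i; simpa using hmem' i
    · rw [eval_eq_eval_mv_eval']
      exact hroot

lemma degreeOf_Ppoly_le {n m Δ p : ℕ} [Fact p.Prime] (ed : Fin m → Sym2 (Fin n)) (k : Fin m) :
    (Ppoly n m Δ p ed).degreeOf (Sum.inr k) ≤ 2 := by
  classical
  unfold Ppoly
  refine (degreeOf_prod_le' _ _ _).trans ?_
  have hfac : ∀ i : Fin n,
      degreeOf (Sum.inr k)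
        (((∏ j ∈ laterNbrs ed i, (X (Sum.inl i) - X (Sum.inl j))) *
            ∏ k' ∈ incidentE ed i, (X (Sum.inl i) - X (Sum.inr k'))) *
          ∏ l ∈ Finset.Icc (Δ + 2) p, (X (Sum.inl i) - C (l : ZMod p)))
        ≤ if i ∈ ed k then 1 else 0 := by
    intro i
    have hA : degreeOf (Sum.inr k)
        ((∏ j ∈ laterNbrs ed i, (X (Sum.inl i) - X (Sum.inl j))) :
          MvPolynomial (Fin n ⊕ Fin m) (ZMod p)) = 0 := by
      have h1 : ∀ j ∈ laterNbrs ed i, degreeOf (Sum.inr k)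
          ((X (Sum.inl i) - X (Sum.inl j)) : MvPolynomial (Fin n ⊕ Fin m) (ZMod p)) = 0 := by
        intro j _
        have h2 := degreeOf_X_sub_X_le (R := ZMod p) (Sum.inr k) (Sum.inl i) (Sum.inl j)
        simpa using h2
      refine Nat.le_zero.mp ((degreeOf_prod_le' _ _ _).trans
        (le_of_eq (Finset.sum_eq_zero h1)))
    have hC : degreeOf (Sum.inr k)
        ((∏ l ∈ Finset.Icc (Δ + 2) p, (X (Sum.inl i) - C (l : ZMod p))) :
          MvPolynomial (Fin n ⊕ Fin m) (ZMod p)) = 0 := by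
      have h1 : ∀ l ∈ Finset.Icc (Δ + 2) p, degreeOf (Sum.inr k)
          ((X (Sum.inl i) - C (l : ZMod p)) : MvPolynomial (Fin n ⊕ Fin m) (ZMod p)) = 0 := by
        intro l _
        have h2 := degreeOf_X_sub_C_le (Sum.inr k) (Sum.inl i) ((l : ZMod p))
        simpa using h2
      refine Nat.le_zero.mp ((degreeOf_prod_le' _ _ _).trans
        (le_of_eq (Finset.sum_eq_zero h1)))
    have hB : degreeOf (Sum.inr k)
        ((∏ k' ∈ incidentE ed i, (X (Sum.inl i) - X (Sum.inr k'))) :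
          MvPolynomial (Fin n ⊕ Fin m) (ZMod p)) ≤ if i ∈ ed k then 1 else 0 := by
      have h1 : ∀ k' ∈ incidentE ed i, degreeOf (Sum.inr k)
          ((X (Sum.inl i) - X (Sum.inr k')) : MvPolynomial (Fin n ⊕ Fin m) (ZMod p))
            ≤ if k = k' then 1 else 0 := by
        intro k' _
        refine (degreeOf_X_sub_X_le (R := ZMod p) (Sum.inr k) (Sum.inl i) (Sum.inr k')).trans
          (le_of_eq ?_)
        by_cases h : k = k' <;> simp [h]
      refine (degreeOf_prod_le' _ _ _).trans ((Finset.sum_le_sum h1).trans ?_)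
      rw [Finset.sum_ite_eq (incidentE ed i) k (fun _ => 1)]
      by_cases h : i ∈ ed k <;> simp [incidentE, h]
    have h3 := degreeOf_mul_le (Sum.inr k)
      (((∏ j ∈ laterNbrs ed i, (X (Sum.inl i) - X (Sum.inl j))) *
        ∏ k' ∈ incidentE ed i, (X (Sum.inl i) - X (Sum.inr k'))) :
          MvPolynomial (Fin n ⊕ Fin m) (ZMod p))
      (∏ l ∈ Finset.Icc (Δ + 2) p, (X (Sum.inl i) - C (l : ZMod p)))
    have h4 := degreeOf_mul_le (Sum.inr k)
      ((∏ j ∈ laterNbrs ed i, (X (Sum.inl i) - X (Sum.inl j))) :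
          MvPolynomial (Fin n ⊕ Fin m) (ZMod p))
      (∏ k' ∈ incidentE ed i, (X (Sum.inl i) - X (Sum.inr k')))
    set t := (if i ∈ ed k then (1 : ℕ) else 0)
    omega
  refine (Finset.sum_le_sum fun i _ => hfac i).trans ?_
  rw [Finset.sum_boole]
  obtain ⟨a, b, hab⟩ : ∃ a b, ed k = s(a, b) := Sym2.exists.mp ⟨ed k, rfl⟩
  have hsub : (Finset.univ.filter fun i : Fin n => i ∈ ed k) ⊆ {a, b} := by
    intro i hi
    rw [Finset.mem_filter, hab, Sym2.mem_iff] at hi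
    simpa using hi.2
  have h5 := (Finset.card_le_card hsub).trans (Finset.card_insert_le _ _)
  simp only [Finset.card_singleton] at h5
  exact_mod_cast h5

lemma vCoeff_mem_support {n m p : ℕ} (F : MvPolynomial (Fin n ⊕ Fin m) (ZMod p))
    (d : Fin n →₀ ℕ) :
    ∀ e ∈ (vCoeff F d).support, ∃ u ∈ F.support, ∀ j, e j = u (Sum.inr j) := by
  classical
  intro e he
  have hrw : vCoeff F d
      = ∑ u ∈ F.support, (if (Finsupp.equivFunOnFinite.symm fun b => u (Sum.inl b)) = d
          then (monomial (Finsupp.equivFunOnFinite.symm fun t => u (Sum.inr t))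
            (F.coeff u) : MvPolynomial (Fin m) (ZMod p)) else 0) := by
    unfold vCoeff
    conv_lhs => rw [← support_sum_monomial_coeff F, map_sum]
    rw [coeff_sum]
    refine Finset.sum_congr rfl fun u _ => ?_
    rw [sumAlgEquiv_monomial, coeff_monomial]
  rw [hrw] at he
  obtain ⟨u, hu, heu⟩ := Finset.mem_biUnion.mp (Finset.mem_of_subset support_sum he)
  refine ⟨u, hu, fun j => ?_⟩
  by_cases hcond : (Finsupp.equivFunOnFinite.symm fun b => u (Sum.inl b)) = d
  · rw [if_pos hcond] at heu
    have : e = Finsupp.equivFunOnFinite.symm fun t => u (Sum.inr t) := by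
      simpa using support_monomial_subset heu
    rw [this]
    simp
  · rw [if_neg hcond] at heu
    simp at heu

lemma degreeOf_vCoeff_le {n m Δ p : ℕ} [Fact p.Prime] (ed : Fin m → Sym2 (Fin n))
    (d : Fin n →₀ ℕ) (j : Fin m) :
    (vCoeff (fermatReduce p (Ppoly n m Δ p ed)) d).degreeOf j ≤ 2 := by
  refine degreeOf_le_iff.mpr fun e he => ?_
  obtain ⟨u, hu, hej⟩ := vCoeff_mem_support _ _ e he
  obtain ⟨w, hw, rfl⟩ := support_sum_monomial_sub _ _ _ u hu
  rw [hej j, Finsupp.mapRange_apply]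
  exact (fermatExp_le _ _).trans (degreeOf_le_iff.mp (degreeOf_Ppoly_le ed j) w hw)

end Helpers

/-- Claim 3.13 of the paper. With `α = Δ+2`, so that
`K = {1, 2, …, Δ+2}`, there is a tuple `β` with every entry in `{1, …, Δ+2}` such that
`Q_1(β) ≠ 0` in `Z_p`; in particular the Fermat reduction `Q'_1` of `Q_1` is nonzero. -/
theorem statement3 (n m Δ p : ℕ) [Fact p.Prime]
    (hm : 1 ≤ m) (hp : m ^ 2 * (2 * Δ + 2) ≤ p)
    (ed : Fin m → Sym2 (Fin n)) (hinj : Function.Injective ed)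
    (hsimple : ∀ k, ¬ (ed k).IsDiag)
    (hΔ : ∀ i, (incidentE ed i).card ≤ Δ)
    (hΔmax : ∃ i, (incidentE ed i).card = Δ)
    (d : Fin n →₀ ℕ) (CP : MvPolynomial (Fin m) (ZMod p))
    (hCP : CP = vCoeff (fermatReduce p (Ppoly n m Δ p ed)) d) (hCP0 : CP ≠ 0) :
    ∃ β : Fin m → ZMod p,
      (∀ j, β j ∈ (Finset.Icc 1 (Δ + 2)).image fun l : ℕ => (l : ZMod p)) ∧
      (eval β (Qpoly Δ p ed ((Δ + 2 : ℕ) : ZMod p) CP 1) ≠ 0 ∧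
        fermatReduce p (Qpoly Δ p ed ((Δ + 2 : ℕ) : ZMod p) CP 1) ≠ 0) := by
  classical
  have hprime : p.Prime := Fact.out
  obtain ⟨m', rfl⟩ : ∃ m', m = m' + 1 := ⟨m - 1, by omega⟩
  -- Δ ≥ 1
  obtain ⟨a0, b0, hab0⟩ : ∃ a b, ed 0 = s(a, b) := Sym2.exists.mp ⟨ed 0, rfl⟩
  have hΔ1 : 1 ≤ Δ := by
    refine le_trans ?_ (hΔ a0)
    refine Finset.card_pos.mpr ⟨0, ?_⟩
    rw [incidentE, Finset.mem_filter]
    exact ⟨Finset.mem_univ _, by rw [hab0]; exact Sym2.mem_mk_left _ _⟩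
  have hp4 : 2 * Δ + 2 ≤ p := by
    have h1 : (1 : ℕ) * (2 * Δ + 2) ≤ (m' + 1) ^ 2 * (2 * Δ + 2) := by
      refine Nat.mul_le_mul_right _ ?_
      nlinarith
    omega
  have hΔ2p : Δ + 2 < p := by omega
  set K : Finset (ZMod p) := (Finset.Icc 1 (Δ + 2)).image (fun l : ℕ => (l : ZMod p)) with hK
  have hinjcast : Set.InjOn (fun l : ℕ => (l : ZMod p)) (Finset.Icc 1 (Δ + 2)) := by
    intro x hx y hy hxy
    simp only [Finset.coe_Icc, Set.mem_Icc] at hx hy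
    have hv := congrArg ZMod.val hxy
    rwa [ZMod.val_natCast_of_lt (by omega), ZMod.val_natCast_of_lt (by omega)] at hv
  have hcardK : K.card = Δ + 2 := by
    rw [hK, Finset.card_image_of_injOn hinjcast, Nat.card_Icc]
    omega
  have hcolor : colorSet Δ p ((Δ + 2 : ℕ) : ZMod p) = K := by
    rw [colorSet, hK, show Δ + 2 = (Δ + 1) + 1 from rfl,
      ← Finset.insert_Icc_right_eq_Icc_add_one (by omega : 1 ≤ Δ + 1 + 1), Finset.image_insert]
  -- degrees of CP
  have hdegCP : ∀ j, CP.degreeOf j ≤ 2 := by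
    rw [hCP]; exact degreeOf_vCoeff_le ed d
  -- split off variable 0
  set q := finSuccEquiv (ZMod p) m' CP with hqdef
  have hq0 : q ≠ 0 := fun h => hCP0 ((finSuccEquiv (ZMod p) m').injective
    (by rw [map_zero]; exact h))
  have hndq : q.natDegree ≤ 2 := by
    rw [hqdef, natDegree_finSuccEquiv]; exact hdegCP 0
  have hKcard3 : 3 ≤ K.card := by omega
  have hex : ∃ a ∈ K, Polynomial.eval (C a) q ≠ 0 := by
    by_contra hall
    push_neg at hall
    have hsub : K.image (C : ZMod p → MvPolynomial (Fin m') (ZMod p)) ⊆ q.roots.toFinset := by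
      intro x hx
      obtain ⟨a, ha, rfl⟩ := Finset.mem_image.mp hx
      exact Multiset.mem_toFinset.mpr ((Polynomial.mem_roots hq0).mpr (hall a ha))
    have h1 := Finset.card_le_card hsub
    rw [Finset.card_image_of_injective K (C_injective _ _)] at h1
    have h2 := (Multiset.toFinset_card_le q.roots).trans (Polynomial.card_roots' q)
    omega
  obtain ⟨a, haK, hFa⟩ := hex
  set Fa := Polynomial.eval (C a) q with hFadef
  have hdegFa : ∀ j, Fa.degreeOf j ≤ 2 := by
    intro j
    rw [hFadef, Polynomial.eval_eq_sum_range]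
    refine degreeOf_sum_le' _ _ _ _ fun i _ => ?_
    refine (degreeOf_mul_le _ _ _).trans ?_
    have h1 : ((C a : MvPolynomial (Fin m') (ZMod p)) ^ i).degreeOf j = 0 := by
      rw [← map_pow, degreeOf_C]
    have h2 := (degreeOf_coeff_finSuccEquiv CP j i).trans (hdegCP j.succ)
    rw [hqdef]
    omega
  -- adjacency set
  have hA2 : ∀ l ∈ laterAdjE ed 0, 2 ≤ Δ := by
    intro l hl
    rw [laterAdjE, Finset.mem_filter] at hl
    obtain ⟨-, ⟨⟨hlne, x, hx0, hxl⟩, -⟩⟩ := hl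
    have hsub : ({0, l} : Finset (Fin (m' + 1))) ⊆ incidentE ed x := by
      intro y hy
      rw [incidentE, Finset.mem_filter]
      rcases Finset.mem_insert.mp hy with rfl | hy
      · exact ⟨Finset.mem_univ _, hx0⟩
      · rw [Finset.mem_singleton] at hy
        subst hy
        exact ⟨Finset.mem_univ _, hxl⟩
    have hcard2 : ({0, l} : Finset (Fin (m' + 1))).card = 2 :=
      Finset.card_pair (fun h => hlne h.symm)
    have := Finset.card_le_card hsub
    rw [hcard2] at this
    exact this.trans (hΔ x)
  -- grid
  set T : Fin m' → Finset (ZMod p) := fun j => if j.succ ∈ laterAdjE ed 0 then K.erase a else K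
    with hT
  have hTdeg : ∀ j, Fa.degreeOf j < (T j).card := by
    intro j
    rw [hT]
    dsimp only
    split
    · rw [Finset.card_erase_of_mem haK]
      have h1 := hA2 _ (by assumption)
      have h2 := hdegFa j
      omega
    · have := hdegFa j
      omega
  obtain ⟨β', hβ'mem, hβ'ev⟩ := grid_exists Fa T hFa hTdeg
  set β : Fin (m' + 1) → ZMod p := Fin.cons a β' with hβ
  -- eval of CP at β
  have hevalCP : eval β CP = eval β' Fa := by
    have h2 : ∀ (r : Polynomial (MvPolynomial (Fin m') (ZMod p))),
        eval β' (Polynomial.eval (C a) r) = Polynomial.eval a (r.map (eval β')) := by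
      intro r
      induction r using Polynomial.induction_on' with
      | add u v hu hv => simp [hu, hv]
      | monomial i c => simp
    rw [hβ, eval_eq_eval_mv_eval', hFadef, h2 q, hqdef]
  have hβK : ∀ j, β j ∈ K := by
    refine Fin.cases ?_ ?_
    · simpa [hβ] using haK
    · intro i
      have hmem := hβ'mem i
      rw [hT] at hmem
      dsimp only at hmem
      rw [hβ, Fin.cons_succ]
      split at hmem
      · exact Finset.mem_of_mem_erase hmem
      · exact hmem
  have hβA : ∀ l ∈ laterAdjE ed 0, β l ≠ β 0 := by
    intro l hl
    have hlne : l ≠ 0 := by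
      rw [laterAdjE, Finset.mem_filter] at hl
      exact hl.2.1.1
    obtain ⟨i, rfl⟩ := Fin.eq_succ_of_ne_zero hlne
    have hmem := hβ'mem i
    rw [hT] at hmem
    dsimp only at hmem
    rw [if_pos hl] at hmem
    rw [hβ, Fin.cons_succ, Fin.cons_zero]
    exact Finset.ne_of_mem_erase hmem
  -- assemble
  have hfilter : (Finset.univ.filter fun k : Fin (m' + 1) => (k : ℕ) < 1) = {0} := by
    ext k
    simp only [Finset.mem_filter, Finset.mem_univ, true_and, Finset.mem_singleton, Nat.lt_one_iff,
      Fin.ext_iff, Fin.val_zero]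
  have hQ : Qpoly Δ p ed ((Δ + 2 : ℕ) : ZMod p) CP 1
      = CP * Epoly Δ p ed ((Δ + 2 : ℕ) : ZMod p) 0 := by
    rw [Qpoly, hfilter, Finset.prod_singleton]
  have hevalE : eval β (Epoly Δ p ed ((Δ + 2 : ℕ) : ZMod p) 0) ≠ 0 := by
    rw [Epoly, map_mul]
    refine mul_ne_zero ?_ ?_
    · rw [map_prod, Finset.prod_ne_zero_iff]
      intro l hl
      simp only [map_sub, eval_X]
      exact sub_ne_zero.mpr (Ne.symm (hβA l hl))
    · rw [map_prod, Finset.prod_ne_zero_iff]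
      intro c hc
      simp only [map_sub, eval_X, eval_C]
      have hcK : c ∉ K := by
        have := (Finset.mem_sdiff.mp hc).2
        rwa [hcolor] at this
      exact sub_ne_zero.mpr (fun h => hcK (h ▸ hβK 0))
  have hevalQ : eval β (Qpoly Δ p ed ((Δ + 2 : ℕ) : ZMod p) CP 1) ≠ 0 := by
    rw [hQ, map_mul]
    exact mul_ne_zero (by rw [hevalCP]; exact hβ'ev) hevalE
  refine ⟨β, fun j => hβK j, hevalQ, fun h => hevalQ ?_⟩
  rw [← eval_fermatReduce p β, h, map_zero]


end
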